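/- Let k be a field of characteristic different from 2, and let R = k[X]/(X² − 1) ≅ k[ℤ/2]. Let k₊ := R/(X − 1) and k₋ := R/(X + 1) be the two one-dimensional simple R-modules. If ∧ is a k-linear additive closed symmetric monoidal structure on the category of left R-modules with unit object K, then K is isomorphic as an R-module to R, to k₊, or to k₋. -/

import Mathlib

open CategoryTheory MonoidalCategory

universe u

/-- An additive closed symmetric monoidal structure on the category of left `R`-modules:
a monoidal structure which is symmetric, closed, and additive (preadditive) in each variable. -/
structure AddClosedSymmMonStruct (R : Type u) [Ring R] : Type (u + 1) where
  mon : MonoidalCategory (ModuleCat.{u} R)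
  symm : @SymmetricCategory (ModuleCat.{u} R) _ mon
  closed : @MonoidalClosed (ModuleCat.{u} R) _ mon
  preadd : @MonoidalPreadditive (ModuleCat.{u} R) _ _ mon

/-- The unit object of the structure. -/
def AddClosedSymmMonStruct.unit {R : Type u} [Ring R] (s : AddClosedSymmMonStruct R) :
    ModuleCat.{u} R :=
  letI := s.mon; 𝟙_ (ModuleCat.{u} R)

/-- The monoidal product (the "wedge") of the structure. -/
def AddClosedSymmMonStruct.wedge {R : Type u} [Ring R] (s : AddClosedSymmMonStruct R)
    (A B : ModuleCat.{u} R) : ModuleCat.{u} R :=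
  letI := s.mon; A ⊗ B

/-- Two additive closed symmetric monoidal structures on `ModuleCat R` are symmetric monoidally
equivalent if there is an equivalence of categories whose underlying functor is monoidal and
braided from the first structure to the second. -/
def AddClosedSymmMonStruct.SymmMonEquivTo {R : Type u} [Ring R]
    (s t : AddClosedSymmMonStruct R) : Prop :=
  ∃ (F : ModuleCat.{u} R ⥤ ModuleCat.{u} R)
    (_ : @Functor.Braided (ModuleCat.{u} R) _ s.mon s.symm.toBraidedCategory
      (ModuleCat.{u} R) _ t.mon t.symm.toBraidedCategory F),
    F.IsEquivalence

/-- The standard additive closed symmetric monoidal structure on modules over a commutative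
ring, given by the tensor product `⊗[R]` with unit `R`. -/
noncomputable def standardAddClosedSymmMonStruct (R : Type u) [CommRing R] :
    AddClosedSymmMonStruct R where
  mon := inferInstance
  symm := inferInstance
  closed := inferInstance
  preadd := inferInstance

/-- A `k`-linear additive closed symmetric monoidal structure on the category of left
`R`-modules, for a `k`-algebra `R`. -/
structure KLinAddClosedSymmMonStruct (k : Type u) [Field k] (R : Type u) [Ring R] [Algebra k R]
    extends AddClosedSymmMonStruct R where
  lin : @MonoidalLinear k _ (ModuleCat.{u} R) _ _ _ mon preadd

/-! ### Auxiliary lemmas -/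

set_option synthInstance.maxHeartbeats 1000000
set_option maxHeartbeats 4000000
set_option linter.unusedSectionVars false

section CatAux

/-- Endomorphisms of the unit object of a monoidal category commute (Eckmann–Hilton). -/
lemma tensorUnit_endo_comm' {C : Type*} [Category C] [MonoidalCategory C]
    (f g : 𝟙_ C ⟶ 𝟙_ C) : f ≫ g = g ≫ f := by
  have h := whisker_exchange (f := f) (g := g)
  simp only [id_whiskerLeft, MonoidalCategory.whiskerRight_id, unitors_equal, unitors_inv_equal,
    Category.assoc, Iso.inv_hom_id_assoc] at h
  have h2 := (cancel_epi (ρ_ (𝟙_ C)).hom).mp h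
  have h3 := (cancel_mono (ρ_ (𝟙_ C)).inv).mp (by simpa [Category.assoc] using h2)
  exact h3.symm

/-- Endomorphisms of the unit of an additive closed symmetric monoidal structure commute. -/
lemma AddClosedSymmMonStruct.unit_endo_comm {R : Type u} [Ring R] (s : AddClosedSymmMonStruct R)
    (f g : ↥(s.unit) →ₗ[R] ↥(s.unit)) : f.comp g = g.comp f := by
  letI := s.mon
  exact congrArg ModuleCat.Hom.hom
    (tensorUnit_endo_comm' (C := ModuleCat.{u} R) (f := ModuleCat.ofHom g) (g := ModuleCat.ofHom f))

/-- The unit of an additive monoidal structure on modules over a nontrivial ring is nonzero. -/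
lemma AddClosedSymmMonStruct.unit_nontrivial {R : Type u} [Ring R] [Nontrivial R]
    (s : AddClosedSymmMonStruct R) : ∃ m : ↥(s.unit), m ≠ 0 := by
  letI := s.mon
  letI := s.preadd
  by_contra h
  push_neg at h
  have hu : (𝟙 (𝟙_ (ModuleCat.{u} R)) : 𝟙_ (ModuleCat.{u} R) ⟶ _) = 0 := by
    apply ModuleCat.hom_ext
    apply LinearMap.ext
    intro m
    exact (h _).trans (h _).symm
  have hX : (𝟙 (ModuleCat.of R R) : ModuleCat.of R R ⟶ _) = 0 := by
    have h1 : (𝟙 (ModuleCat.of R R) : ModuleCat.of R R ⟶ _) =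
        (λ_ (ModuleCat.of R R)).inv ≫ ((𝟙 (𝟙_ (ModuleCat.{u} R))) ▷ (ModuleCat.of R R)) ≫
          (λ_ (ModuleCat.of R R)).hom := by
      simp
    rw [hu] at h1
    simpa using h1
  have h1 : (1 : R) = 0 := by
    have := congrArg (fun (φ : ModuleCat.of R R ⟶ ModuleCat.of R R) => φ (1 : R)) hX
    exact this.trans rfl
  exact one_ne_zero h1

end CatAux

namespace UnitOfGroupRingAux

open Polynomial

variable (k : Type) [Field k]

local notation "AA" => (Polynomial k ⧸ Ideal.span {(Polynomial.X : Polynomial k) ^ 2 - 1})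

/-- The image of `X` in `k[X]/(X² - 1)`. -/
noncomputable def xA : Polynomial k ⧸ Ideal.span {(Polynomial.X : Polynomial k) ^ 2 - 1} :=
  Ideal.Quotient.mk _ Polynomial.X

lemma xA_sq : xA k * xA k = 1 := by
  have h : (Ideal.Quotient.mk (Ideal.span {(X : Polynomial k) ^ 2 - 1}))
      ((X : Polynomial k) ^ 2 - 1) = 0 :=
    Ideal.Quotient.eq_zero_iff_mem.2 (Ideal.subset_span (Set.mem_singleton _))
  have h2 : xA k ^ 2 - 1 = 0 := by
    simpa [xA, map_sub, map_pow] using h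
  have := sub_eq_zero.mp h2
  rw [← sq]; exact this

lemma one_ne_zero_A : (1 : AA) ≠ 0 := by
  intro h
  have h1 : ((1 : Polynomial k) : Polynomial k) ∈ Ideal.span {(X : Polynomial k) ^ 2 - 1} := by
    have : (Ideal.Quotient.mk (Ideal.span {(X : Polynomial k) ^ 2 - 1})) 1 = 0 := by
      rw [map_one]; exact h
    exact Ideal.Quotient.eq_zero_iff_mem.mp this
  obtain ⟨c, hc⟩ := Ideal.mem_span_singleton'.mp h1
  have := congrArg (Polynomial.eval (1 : k)) hc
  simp at this

lemma adjoin_xA : Algebra.adjoin k {xA k} = ⊤ := by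
  have himg : ({xA k} : Set (Polynomial k ⧸ Ideal.span {(X : Polynomial k) ^ 2 - 1}))
      = (Ideal.Quotient.mkₐ k (Ideal.span {(X : Polynomial k) ^ 2 - 1})) '' {X} := by
    simp [xA, Ideal.Quotient.mkₐ_eq_mk]
  rw [himg, ← AlgHom.map_adjoin, Polynomial.adjoin_X, Algebra.map_top, AlgHom.range_eq_top]
  exact Ideal.Quotient.mkₐ_surjective k _

variable {k}
variable {M : Type}
  [AddCommGroup M]
  [Module (Polynomial k ⧸ Ideal.span {(Polynomial.X : Polynomial k) ^ 2 - 1}) M]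
  [Module k M]
  [IsScalarTower k (Polynomial k ⧸ Ideal.span {(Polynomial.X : Polynomial k) ^ 2 - 1}) M]

lemma ksmul_eq_zero {a : k} {u : M} (h : a • u = 0) (hu : u ≠ 0) : a = 0 := by
  by_contra ha
  apply hu
  have := congrArg (fun z => a⁻¹ • z) h
  simpa [smul_smul, inv_mul_cancel₀ ha] using this

/-- A `k`-linear map commuting appropriately with the action of `x` can be corrected to an
`A`-linear endomorphism. -/
lemma exists_Alinear (σ : k) (ε : AA) (hxε : xA k * ε = algebraMap k AA σ * ε)
    (f : M →ₗ[k] M) (hf : ∀ m : M, xA k • f m = σ • f m) :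
    ∃ F : M →ₗ[AA] M, ∀ m, F m = f (ε • m) := by
  let S : Subalgebra k AA :=
    { carrier := {r | ∀ m : M, f (ε • (r • m)) = r • f (ε • m)}
      mul_mem' := by
        intro r s hr hs m
        rw [mul_smul, hr (s • m), hs m, mul_smul]
      one_mem' := by intro m; rw [one_smul, one_smul]
      add_mem' := by
        intro r s hr hs m
        rw [add_smul, smul_add, map_add, hr m, hs m, add_smul]
      zero_mem' := by
        intro m; rw [zero_smul AA m, smul_zero, map_zero, zero_smul AA (f (ε • m))]
      algebraMap_mem' := by
        intro a m
        rw [algebraMap_smul, algebraMap_smul, smul_comm, map_smul] }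
  have hxS : xA k ∈ S := by
    intro m
    have h1 : ε • (xA k • m) = σ • (ε • m) := by
      rw [smul_smul, mul_comm ε (xA k), hxε, mul_smul, algebraMap_smul]
    rw [h1, map_smul]
    exact (hf (ε • m)).symm
  have hall : ∀ r : (Polynomial k ⧸ Ideal.span {(Polynomial.X : Polynomial k) ^ 2 - 1}),
      r ∈ S := by
    intro r
    have hle : Algebra.adjoin k {xA k} ≤ S := Algebra.adjoin_le (Set.singleton_subset_iff.2 hxS)
    rw [adjoin_xA] at hle
    exact hle Algebra.mem_top
  exact ⟨{ toFun := fun m => f (ε • m)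
           map_add' := fun m n => by
             show f (ε • (m + n)) = f (ε • m) + f (ε • n)
             rw [smul_add, map_add]
           map_smul' := fun r m => hall r m }, fun m => rfl⟩

lemma xsmul_of_fixed (σ : k) (ε : AA) (hxε : xA k * ε = algebraMap k AA σ * ε)
    (u : M) (hu : ε • u = u) : xA k • u = σ • u := by
  have h : xA k • (ε • u) = σ • (ε • u) := by
    rw [smul_smul, hxε, mul_smul, algebraMap_smul]
  rwa [hu] at h

/-- Two nonzero vectors in the `ε`-eigenspace are `k`-linearly dependent, because the
endomorphism algebra is commutative. -/
lemma no_two_indep (hcomm : ∀ F G : M →ₗ[AA] M, F.comp G = G.comp F)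
    (σ : k) (ε : AA) (hxε : xA k * ε = algebraMap k AA σ * ε)
    (v w : M) (hv : ε • v = v) (hw : ε • w = w)
    (hv0 : v ≠ 0) (hwv : w ∉ Submodule.span k {v}) : False := by
  have hw0 : w ≠ 0 := fun h => hwv (h ▸ Submodule.zero_mem _)
  have hwv' : w ∉ ({v} : Set M) := by
    intro h
    rw [Set.mem_singleton_iff] at h
    rw [h] at hwv
    exact hwv (Submodule.mem_span_singleton_self v)
  have li : LinearIndepOn k id (insert w {v} : Set M) :=
    (linearIndepOn_id_insert hwv').2 ⟨(linearIndepOn_singleton_iff k).2 hv0, hwv⟩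
  let b := Module.Basis.extend li
  have hvmem : v ∈ li.extend (Set.subset_univ _) :=
    li.subset_extend _ (Set.mem_insert_of_mem _ rfl)
  have hwmem : w ∈ li.extend (Set.subset_univ _) :=
    li.subset_extend _ (Set.mem_insert _ _)
  let iv : ↥(li.extend (Set.subset_univ _)) := ⟨v, hvmem⟩
  let iw : ↥(li.extend (Set.subset_univ _)) := ⟨w, hwmem⟩
  have hbv : b iv = v := Module.Basis.extend_apply_self li iv
  have hbw : b iw = w := Module.Basis.extend_apply_self li iw
  have hne : iw ≠ iv := by
    intro h
    apply hwv'
    have : w = v := congrArg Subtype.val h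
    rw [this]; exact rfl
  have hcv : b.coord iv v = 1 := by
    have h1 : b.coord iv (b iv) = 1 := by
      simp [Module.Basis.coord_apply, Module.Basis.repr_self]
    rwa [hbv] at h1
  have hcw : b.coord iv w = 0 := by
    have h1 : b.coord iv (b iw) = 0 := by
      simp [Module.Basis.coord_apply, Module.Basis.repr_self, Finsupp.single_eq_of_ne' hne]
    rwa [hbw] at h1
  have hxv : xA k • v = σ • v := xsmul_of_fixed σ ε hxε v hv
  have hxw : xA k • w = σ • w := xsmul_of_fixed σ ε hxε w hw
  let f : M →ₗ[k] M := LinearMap.smulRight (b.coord iv) v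
  let g : M →ₗ[k] M := LinearMap.smulRight (b.coord iv) w
  have hfx : ∀ m : M, xA k • f m = σ • f m := by
    intro m
    show xA k • (b.coord iv m • v) = σ • (b.coord iv m • v)
    rw [smul_comm (xA k) (b.coord iv m) v, hxv, smul_comm]
  have hgx : ∀ m : M, xA k • g m = σ • g m := by
    intro m
    show xA k • (b.coord iv m • w) = σ • (b.coord iv m • w)
    rw [smul_comm (xA k) (b.coord iv m) w, hxw, smul_comm]
  obtain ⟨F, hF⟩ := exists_Alinear σ ε hxε f hfx
  obtain ⟨G, hG⟩ := exists_Alinear σ ε hxε g hgx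
  have hFv : F v = v := by
    rw [hF, hv]
    show b.coord iv v • v = v
    rw [hcv, one_smul]
  have hFw : F w = 0 := by
    rw [hF, hw]
    show b.coord iv w • v = 0
    rw [hcw, zero_smul]
  have hGv : G v = w := by
    rw [hG, hv]
    show b.coord iv v • w = w
    rw [hcv, one_smul]
  have heq := congrArg (fun (L : M →ₗ[AA] M) => L v) (hcomm F G)
  simp only [LinearMap.comp_apply] at heq
  rw [hGv, hFw, hFv, hGv] at heq
  exact hw0 heq.symm

lemma mem_span_of (hcomm : ∀ F G : M →ₗ[AA] M, F.comp G = G.comp F)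
    (σ : k) (ε : AA) (hxε : xA k * ε = algebraMap k AA σ * ε)
    (v : M) (hv : ε • v = v) (hv0 : v ≠ 0)
    (u : M) (hu : ε • u = u) : ∃ a : k, u = a • v := by
  by_cases h : u ∈ Submodule.span k {v}
  · obtain ⟨a, ha⟩ := Submodule.mem_span_singleton.mp h
    exact ⟨a, ha.symm⟩
  · exact (no_two_indep hcomm σ ε hxε v u hv hu hv0 h).elim

/-- If both idempotent pieces of `M` are nonzero (and each one-dimensional), then `M ≅ A`. -/
lemma equiv_full (ε ε' : AA) (hsum : ε + ε' = 1) (hmul : ε * ε' = 0)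
    (hrep : ∀ r : AA, ∃ a b : k, r = algebraMap k AA a * ε + algebraMap k AA b * ε')
    (v w : M) (hv : ε • v = v) (hw : ε' • w = w) (hv0 : v ≠ 0) (hw0 : w ≠ 0)
    (hspanv : ∀ u : M, ε • u = u → ∃ a : k, u = a • v)
    (hspanw : ∀ u : M, ε' • u = u → ∃ a : k, u = a • w) :
    Nonempty (M ≃ₗ[Polynomial k ⧸ Ideal.span {(Polynomial.X : Polynomial k) ^ 2 - 1}]
      (Polynomial k ⧸ Ideal.span {(Polynomial.X : Polynomial k) ^ 2 - 1})) := by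
  have hidem : ε * ε = ε := by linear_combination ε * hsum - hmul
  have hidem' : ε' * ε' = ε' := by linear_combination ε' * hsum - hmul
  have hεw : ε • w = 0 := by
    rw [← hw, smul_smul, hmul]
    exact zero_smul (Polynomial k ⧸ Ideal.span {(Polynomial.X : Polynomial k) ^ 2 - 1}) w
  have hε'v : ε' • v = 0 := by
    rw [← hv, smul_smul, mul_comm, hmul]
    exact zero_smul (Polynomial k ⧸ Ideal.span {(Polynomial.X : Polynomial k) ^ 2 - 1}) v
  let φ := LinearMap.toSpanSingleton
    (Polynomial k ⧸ Ideal.span {(Polynomial.X : Polynomial k) ^ 2 - 1}) M (v + w)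
  have hφ : ∀ r : AA, φ r = r • (v + w) := fun r => rfl
  have hφe : ε • (v + w) = v := by rw [smul_add, hv, hεw, add_zero]
  have hφe' : ε' • (v + w) = w := by rw [smul_add, hε'v, hw, zero_add]
  have hker : ∀ r : AA, φ r = 0 → r = 0 := by
    intro r hr
    rw [hφ] at hr
    obtain ⟨a, b, hab⟩ := hrep r
    rw [hab, add_smul, mul_smul, mul_smul, hφe, hφe'] at hr
    have h1 : a • v = 0 := by
      have h := congrArg (fun m => ε • m) hr
      simp only [smul_add, smul_zero] at h
      rw [smul_smul, mul_comm ε (algebraMap k AA a), mul_smul, hv,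
        smul_smul, mul_comm ε (algebraMap k AA b), mul_smul, hεw, smul_zero, add_zero,
        algebraMap_smul] at h
      exact h
    have h2 : b • w = 0 := by
      have h := congrArg (fun m => ε' • m) hr
      simp only [smul_add, smul_zero] at h
      rw [smul_smul, mul_comm ε' (algebraMap k AA a), mul_smul, hε'v, smul_zero,
        smul_smul, mul_comm ε' (algebraMap k AA b), mul_smul, hw, zero_add,
        algebraMap_smul] at h
      exact h
    have ha : a = 0 := ksmul_eq_zero h1 hv0
    have hb : b = 0 := ksmul_eq_zero h2 hw0
    rw [hab, ha, hb, map_zero, zero_mul, zero_mul, add_zero]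
  have hinj : Function.Injective φ := by
    rw [← LinearMap.ker_eq_bot]
    exact LinearMap.ker_eq_bot'.mpr hker
  have hsurj : Function.Surjective φ := by
    intro m
    have hm : m = ε • m + ε' • m := by rw [← add_smul, hsum, one_smul]
    obtain ⟨a, ha⟩ := hspanv (ε • m) (by rw [smul_smul, hidem])
    obtain ⟨b, hb⟩ := hspanw (ε' • m) (by rw [smul_smul, hidem'])
    refine ⟨algebraMap k AA a * ε + algebraMap k AA b * ε', ?_⟩
    rw [hφ, add_smul, mul_smul, mul_smul, hφe, hφe', algebraMap_smul, algebraMap_smul,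
      ← ha, ← hb, ← hm]
  exact ⟨(LinearEquiv.ofBijective φ ⟨hinj, hsurj⟩).symm⟩

/-- If the `ε'`-piece of `M` vanishes and the `ε`-piece is one-dimensional spanned by `v`,
then `M ≅ A/(x - σ)`. -/
lemma equiv_quot (σ σ' : k) (hσ : σ' - σ ≠ 0) (ε ε' : AA)
    (hsum : ε + ε' = 1) (hmul : ε * ε' = 0)
    (hxε : xA k * ε = algebraMap k AA σ * ε) (hxε' : xA k * ε' = algebraMap k AA σ' * ε')
    (hrep : ∀ r : AA, ∃ a b : k, r = algebraMap k AA a * ε + algebraMap k AA b * ε')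
    (v : M) (hv : ε • v = v) (hv0 : v ≠ 0)
    (hspan : ∀ u : M, ε • u = u → ∃ a : k, u = a • v)
    (hdead : ∀ m : M, ε' • m = 0) :
    Nonempty (M ≃ₗ[Polynomial k ⧸ Ideal.span {(Polynomial.X : Polynomial k) ^ 2 - 1}]
      ((Polynomial k ⧸ Ideal.span {(Polynomial.X : Polynomial k) ^ 2 - 1}) ⧸
        Ideal.span {xA k - algebraMap k AA σ})) := by
  have hxv : xA k • v = σ • v := xsmul_of_fixed σ ε hxε v hv
  have hε'x : xA k - algebraMap k AA σ = algebraMap k AA (σ' - σ) * ε' := by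
    have h1 : xA k * (ε + ε') = algebraMap k AA σ * ε + algebraMap k AA σ' * ε' := by
      rw [mul_add, hxε, hxε']
    rw [hsum, mul_one] at h1
    rw [map_sub]
    linear_combination h1 + algebraMap k AA σ * hsum
  have hε'mem : ε' ∈ Ideal.span {xA k - algebraMap k AA σ} := by
    rw [Ideal.mem_span_singleton']
    refine ⟨algebraMap k AA (σ' - σ)⁻¹, ?_⟩
    rw [hε'x, ← mul_assoc, ← map_mul, inv_mul_cancel₀ hσ, map_one, one_mul]
  set I := Ideal.span {xA k - algebraMap k AA σ} with hI
  let φ := LinearMap.toSpanSingleton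
    (Polynomial k ⧸ Ideal.span {(Polynomial.X : Polynomial k) ^ 2 - 1}) M v
  have hφ : ∀ r : AA, φ r = r • v := fun r => rfl
  have hIker : (I : Submodule (Polynomial k ⧸ Ideal.span {(Polynomial.X : Polynomial k) ^ 2 - 1})
      (Polynomial k ⧸ Ideal.span {(Polynomial.X : Polynomial k) ^ 2 - 1})) ≤
        LinearMap.ker φ := by
    rw [hI, Ideal.span_le]
    intro r hr
    rw [Set.mem_singleton_iff] at hr
    subst hr
    rw [SetLike.mem_coe, LinearMap.mem_ker, hφ, sub_smul, algebraMap_smul, hxv, sub_self]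
  let ψ := Submodule.liftQ I φ hIker
  have hψ : ∀ r : AA, ψ (Submodule.Quotient.mk r) = r • v := fun r => rfl
  have hfix : ∀ m : M, ε • m = m := by
    intro m
    have h1 : (ε + ε') • m = m := by rw [hsum, one_smul]
    rwa [add_smul, hdead, add_zero] at h1
  have hsurj : Function.Surjective ψ := by
    intro m
    obtain ⟨a, ha⟩ := hspan m (hfix m)
    exact ⟨Submodule.Quotient.mk (algebraMap k AA a), by rw [hψ, algebraMap_smul, ← ha]⟩
  have hker : LinearMap.ker ψ = ⊥ := by
    apply Submodule.ker_liftQ_eq_bot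
    intro r hr
    rw [LinearMap.mem_ker, hφ] at hr
    obtain ⟨a, b, hab⟩ := hrep r
    have h1 : a • v = 0 := by
      rw [hab, add_smul, mul_smul, mul_smul, hv, hdead, smul_zero, add_zero,
        algebraMap_smul] at hr
      exact hr
    have ha : a = 0 := ksmul_eq_zero h1 hv0
    rw [hab, ha, map_zero, zero_mul, zero_add]
    exact Ideal.mul_mem_left I _ hε'mem
  have hinj : Function.Injective ψ := by
    rw [← LinearMap.ker_eq_bot]
    exact hker
  exact ⟨(LinearEquiv.ofBijective ψ ⟨hinj, hsurj⟩).symm⟩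

/-- Every element of `A = k[X]/(X²-1)` is a `k`-combination of `1` and `x`. -/
lemma span_one_x : ∀ r : (Polynomial k ⧸ Ideal.span {(Polynomial.X : Polynomial k) ^ 2 - 1}),
    ∃ a b : k, r = algebraMap k AA a + algebraMap k AA b * xA k := by
  have hx := xA_sq k
  let T : Subalgebra k AA :=
    { carrier := {r | ∃ a b : k, r = algebraMap k AA a + algebraMap k AA b * xA k}
      mul_mem' := by
        rintro r s ⟨a, b, rfl⟩ ⟨a', b', rfl⟩
        refine ⟨a * a' + b * b', a * b' + b * a', ?_⟩
        simp only [map_add, map_mul]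
        linear_combination (algebraMap k AA b * algebraMap k AA b') * hx
      one_mem' := ⟨1, 0, by simp⟩
      add_mem' := by
        rintro r s ⟨a, b, rfl⟩ ⟨a', b', rfl⟩
        refine ⟨a + a', b + b', ?_⟩
        simp only [map_add]
        ring
      zero_mem' := ⟨0, 0, by simp⟩
      algebraMap_mem' := fun a => ⟨a, 0, by simp⟩ }
  have hxT : xA k ∈ T := ⟨0, 1, by simp⟩
  intro r
  have hle : Algebra.adjoin k {xA k} ≤ T := Algebra.adjoin_le (Set.singleton_subset_iff.2 hxT)
  rw [adjoin_xA] at hle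
  exact hle Algebra.mem_top

/-- The classification of `A`-modules with commutative endomorphism ring. -/
theorem classify (h2 : (2 : k) ≠ 0)
    (hcomm : ∀ F G : M →ₗ[AA] M, F.comp G = G.comp F)
    (m₀ : M) (hm0 : m₀ ≠ 0) :
    Nonempty (M ≃ₗ[Polynomial k ⧸ Ideal.span {(Polynomial.X : Polynomial k) ^ 2 - 1}]
        (Polynomial k ⧸ Ideal.span {(Polynomial.X : Polynomial k) ^ 2 - 1})) ∨
      Nonempty (M ≃ₗ[Polynomial k ⧸ Ideal.span {(Polynomial.X : Polynomial k) ^ 2 - 1}]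
        ((Polynomial k ⧸ Ideal.span {(Polynomial.X : Polynomial k) ^ 2 - 1}) ⧸
          Ideal.span {Ideal.Quotient.mk (Ideal.span {(Polynomial.X : Polynomial k) ^ 2 - 1})
            (Polynomial.X - 1)})) ∨
      Nonempty (M ≃ₗ[Polynomial k ⧸ Ideal.span {(Polynomial.X : Polynomial k) ^ 2 - 1}]
        ((Polynomial k ⧸ Ideal.span {(Polynomial.X : Polynomial k) ^ 2 - 1}) ⧸
          Ideal.span {Ideal.Quotient.mk (Ideal.span {(Polynomial.X : Polynomial k) ^ 2 - 1})
            (Polynomial.X + 1)})) := by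
  have hx := xA_sq k
  have h2A : algebraMap k AA 2⁻¹ * (2 : AA) = 1 := by
    rw [show ((2 : AA)) = algebraMap k AA 2 from (map_ofNat _ 2).symm, ← map_mul,
      inv_mul_cancel₀ h2, map_one]
  set e : (Polynomial k ⧸ Ideal.span {(Polynomial.X : Polynomial k) ^ 2 - 1}) :=
    algebraMap k AA 2⁻¹ * (1 + xA k) with he
  set e' : (Polynomial k ⧸ Ideal.span {(Polynomial.X : Polynomial k) ^ 2 - 1}) :=
    algebraMap k AA 2⁻¹ * (1 - xA k) with he'
  have hsum : e + e' = 1 := by rw [he, he']; linear_combination h2A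
  have hmul : e * e' = 0 := by
    rw [he, he']
    linear_combination (-(algebraMap k AA 2⁻¹ * algebraMap k AA 2⁻¹)) * hx
  have hsum' : e' + e = 1 := by rw [add_comm]; exact hsum
  have hmul' : e' * e = 0 := by rw [mul_comm]; exact hmul
  have hxe : xA k * e = algebraMap k AA (1 : k) * e := by
    rw [map_one, one_mul, he]
    linear_combination algebraMap k AA 2⁻¹ * hx
  have hxe' : xA k * e' = algebraMap k AA (-1 : k) * e' := by
    rw [map_neg, map_one, he']
    linear_combination (-(algebraMap k AA 2⁻¹)) * hx
  have hidem : e * e = e := by linear_combination e * hsum - hmul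
  have hidem' : e' * e' = e' := by linear_combination e' * hsum - hmul
  have hrep : ∀ r : AA, ∃ a b : k, r = algebraMap k AA a * e + algebraMap k AA b * e' := by
    intro r
    obtain ⟨c₀, c₁, hc⟩ := span_one_x r
    refine ⟨c₀ + c₁, c₀ - c₁, ?_⟩
    rw [hc, he, he']
    simp only [map_add, map_sub]
    linear_combination (-(algebraMap k AA c₀ + algebraMap k AA c₁ * xA k)) * h2A
  have hrep' : ∀ r : AA, ∃ a b : k, r = algebraMap k AA a * e' + algebraMap k AA b * e := by
    intro r
    obtain ⟨a, b, hab⟩ := hrep r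
    exact ⟨b, a, by rw [hab, add_comm]⟩
  -- the ideals
  have hXm1 : (Ideal.Quotient.mk (Ideal.span {(Polynomial.X : Polynomial k) ^ 2 - 1})
      (Polynomial.X - 1)) = xA k - algebraMap k AA (1 : k) := by
    rw [map_sub, map_one, map_one]; rfl
  have hXp1 : (Ideal.Quotient.mk (Ideal.span {(Polynomial.X : Polynomial k) ^ 2 - 1})
      (Polynomial.X + 1)) = xA k - algebraMap k AA (-1 : k) := by
    rw [map_add, map_one, map_neg, map_one, sub_neg_eq_add]; rfl
  by_cases hP : ∃ v : M, e • v = v ∧ v ≠ 0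
  · by_cases hQ : ∃ w : M, e' • w = w ∧ w ≠ 0
    · obtain ⟨v, hv, hv0⟩ := hP
      obtain ⟨w, hw, hw0⟩ := hQ
      left
      exact equiv_full e e' hsum hmul hrep v w hv hw hv0 hw0
        (fun u hu => mem_span_of hcomm 1 e hxe v hv hv0 u hu)
        (fun u hu => mem_span_of hcomm (-1) e' hxe' w hw hw0 u hu)
    · obtain ⟨v, hv, hv0⟩ := hP
      right; left
      push_neg at hQ
      have hdead : ∀ m : M, e' • m = 0 := by
        intro m
        by_contra hne
        exact hne (hQ (e' • m) (by rw [smul_smul, hidem']) )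
      rw [hXm1]
      exact equiv_quot 1 (-1) (by intro h; exact h2 (by linear_combination -h)) e e'
        hsum hmul hxe hxe' hrep v hv hv0
        (fun u hu => mem_span_of hcomm 1 e hxe v hv hv0 u hu) hdead
  · by_cases hQ : ∃ w : M, e' • w = w ∧ w ≠ 0
    · obtain ⟨w, hw, hw0⟩ := hQ
      right; right
      push_neg at hP
      have hdead : ∀ m : M, e • m = 0 := by
        intro m
        by_contra hne
        exact hne (hP (e • m) (by rw [smul_smul, hidem]))
      rw [hXp1]
      exact equiv_quot (-1) 1 (by intro h; exact h2 (by linear_combination h)) e' e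
        hsum' hmul' hxe' hxe hrep' w hw hw0
        (fun u hu => mem_span_of hcomm (-1) e' hxe' w hw hw0 u hu) hdead
    · exfalso
      push_neg at hP
      push_neg at hQ
      have hdead : ∀ m : M, e • m = 0 := by
        intro m
        by_contra hne
        exact hne (hP (e • m) (by rw [smul_smul, hidem]))
      have hdead' : ∀ m : M, e' • m = 0 := by
        intro m
        by_contra hne
        exact hne (hQ (e' • m) (by rw [smul_smul, hidem']))
      apply hm0
      have h1 : (e + e') • m₀ = m₀ := by rw [hsum, one_smul]
      rw [add_smul, hdead, hdead', add_zero] at h1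
      exact h1.symm

end UnitOfGroupRingAux

set_option synthInstance.maxHeartbeats 1000000 in
set_option maxHeartbeats 4000000 in
/-- Let `k` be a field of characteristic different from `2`, and `R = k[X]/(X² - 1) ≅ k[ℤ/2]`.
The unit `K` of any `k`-linear additive closed symmetric monoidal structure on `R`-modules is
isomorphic to `R`, to `k₊ = R/(x - 1)` or to `k₋ = R/(x + 1)`. -/
theorem unit_of_groupRing (k : Type) [Field k] (h2 : (2 : k) ≠ 0)
    (s : KLinAddClosedSymmMonStruct k
      (Polynomial k ⧸ Ideal.span {(Polynomial.X : Polynomial k) ^ 2 - 1})) :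
    Nonempty (↥(s.unit) ≃ₗ[Polynomial k ⧸ Ideal.span {(Polynomial.X : Polynomial k) ^ 2 - 1}]
        (Polynomial k ⧸ Ideal.span {(Polynomial.X : Polynomial k) ^ 2 - 1})) ∨
      Nonempty (↥(s.unit) ≃ₗ[Polynomial k ⧸ Ideal.span {(Polynomial.X : Polynomial k) ^ 2 - 1}]
        ((Polynomial k ⧸ Ideal.span {(Polynomial.X : Polynomial k) ^ 2 - 1}) ⧸
          Ideal.span {Ideal.Quotient.mk (Ideal.span {(Polynomial.X : Polynomial k) ^ 2 - 1})
            (Polynomial.X - 1)})) ∨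
      Nonempty (↥(s.unit) ≃ₗ[Polynomial k ⧸ Ideal.span {(Polynomial.X : Polynomial k) ^ 2 - 1}]
        ((Polynomial k ⧸ Ideal.span {(Polynomial.X : Polynomial k) ^ 2 - 1}) ⧸
          Ideal.span {Ideal.Quotient.mk (Ideal.span {(Polynomial.X : Polynomial k) ^ 2 - 1})
            (Polynomial.X + 1)})) := by
  haveI : Nontrivial (Polynomial k ⧸ Ideal.span {(Polynomial.X : Polynomial k) ^ 2 - 1}) :=
    nontrivial_of_ne 1 0 (UnitOfGroupRingAux.one_ne_zero_A k)
  obtain ⟨m₀, hm0⟩ := s.toAddClosedSymmMonStruct.unit_nontrivial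
  have hcomm := s.toAddClosedSymmMonStruct.unit_endo_comm
  letI : Module k ↥(s.unit) := Module.compHom _
    (algebraMap k (Polynomial k ⧸ Ideal.span {(Polynomial.X : Polynomial k) ^ 2 - 1}))
  haveI : IsScalarTower k (Polynomial k ⧸ Ideal.span {(Polynomial.X : Polynomial k) ^ 2 - 1})
      ↥(s.unit) :=
    ⟨fun a r m => by
      show (a • r) • m = (algebraMap k (Polynomial k ⧸ Ideal.span {(Polynomial.X : Polynomial k) ^ 2 - 1}) a) • r • m
      rw [← mul_smul]; congr 1; exact Algebra.smul_def a r⟩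
  exact UnitOfGroupRingAux.classify h2 hcomm m₀ hm0
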